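/- Let φ : M → M' be an R-linear map intertwining the nilpotent operators, i.e. φ ∘ N = N' ∘ φ, and assume φ is strict with respect to the monodromy filtrations: φ(fil^M_a M) = fil^M_a M' ∩ range(φ) for every integer a. Then the monodromy filtration of the kernel and of the cokernel is the induced subspace and quotient filtration. Precisely: N restricts to a nilpotent endomorphism of ker(φ) and the monodromy filtration of (ker(φ), N|_{ker(φ)}) satisfies fil^M_a(ker φ) = fil^M_a M ∩ ker(φ) for every integer a; and N' descends to a nilpotent endomorphism of M'/range(φ) and the monodromy filtration of (M'/range(φ), induced N') equals, for every integer a, the image of fil^M_a M' under the quotient map M' → M'/range(φ). -/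

import Mathlib

/-- `fil_a M = ker(N^{a+1})` for `a ≥ −1`, and `fil_a M = 0` for `a < −1`. -/
noncomputable def filKer {R M : Type*} [CommRing R] [AddCommGroup M] [Module R M]
    (N : M →ₗ[R] M) (a : ℤ) : Submodule R M :=
  LinearMap.ker (N ^ (a + 1).toNat)

/-- `fil^a M = range(N^a)` for `a ≥ 0`, and `fil^a M = M` for `a < 0`. -/
noncomputable def filRange {R M : Type*} [CommRing R] [AddCommGroup M] [Module R M]
    (N : M →ₗ[R] M) (a : ℤ) : Submodule R M :=
  LinearMap.range (N ^ a.toNat)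

/-- The monodromy filtration `fil^M_a M = Σ_{b−c=a} (fil_b M ∩ fil^c M)`. -/
noncomputable def filMonodromy {R M : Type*} [CommRing R] [AddCommGroup M] [Module R M]
    (N : M →ₗ[R] M) (a : ℤ) : Submodule R M :=
  ⨆ (b : ℤ) (c : ℤ) (_ : b - c = a), filKer N b ⊓ filRange N c

section Basic

variable {R : Type*} [CommRing R] {M : Type*} [AddCommGroup M] [Module R M]

lemma powAdd (N : M →ₗ[R] M) (m n : ℕ) (x : M) : (N ^ (m + n)) x = (N ^ m) ((N ^ n) x) := by
  rw [pow_add]; rfl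

lemma kerPow_mono (N : M →ₗ[R] M) {m n : ℕ} (h : m ≤ n) :
    LinearMap.ker (N ^ m) ≤ LinearMap.ker (N ^ n) := by
  intro x hx
  rw [LinearMap.mem_ker] at hx ⊢
  obtain ⟨d, rfl⟩ := Nat.exists_eq_add_of_le h
  rw [add_comm, powAdd, hx, map_zero]

lemma rangePow_mono (N : M →ₗ[R] M) {m n : ℕ} (h : m ≤ n) :
    LinearMap.range (N ^ n) ≤ LinearMap.range (N ^ m) := by
  rintro x ⟨y, rfl⟩
  obtain ⟨d, rfl⟩ := Nat.exists_eq_add_of_le h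
  exact ⟨(N ^ d) y, (powAdd N m d y).symm⟩

lemma mem_filKer {N : M →ₗ[R] M} {b : ℤ} {x : M} :
    x ∈ filKer N b ↔ (N ^ (b + 1).toNat) x = 0 := LinearMap.mem_ker

lemma mem_filRange {N : M →ₗ[R] M} {c : ℤ} {x : M} :
    x ∈ filRange N c ↔ ∃ y, (N ^ c.toNat) y = x := LinearMap.mem_range

lemma filKer_natCast (N : M →ₗ[R] M) (nb : ℕ) :
    filKer N (nb : ℤ) = LinearMap.ker (N ^ (nb + 1)) := by
  show LinearMap.ker (N ^ ((nb : ℤ) + 1).toNat) = _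
  rw [show ((nb : ℤ) + 1).toNat = nb + 1 by omega]

lemma filRange_natCast (N : M →ₗ[R] M) (nc : ℕ) :
    filRange N (nc : ℤ) = LinearMap.range (N ^ nc) := by
  show LinearMap.range (N ^ ((nc : ℤ)).toNat) = _
  rw [show ((nc : ℤ)).toNat = nc by omega]

lemma filKer_mono (N : M →ₗ[R] M) {b b' : ℤ} (h : b ≤ b') : filKer N b ≤ filKer N b' :=
  kerPow_mono N (by omega)

lemma filRange_mono (N : M →ₗ[R] M) {c c' : ℤ} (h : c ≤ c') : filRange N c' ≤ filRange N c :=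
  rangePow_mono N (by omega)

lemma filKer_neg (N : M →ₗ[R] M) {b : ℤ} (h : b ≤ -1) : filKer N b = ⊥ := by
  unfold filKer
  rw [show (b + 1).toNat = 0 by omega, pow_zero]
  exact LinearMap.ker_id

lemma filRange_neg (N : M →ₗ[R] M) {c : ℤ} (h : c ≤ 0) : filRange N c = ⊤ := by
  unfold filRange
  rw [show c.toNat = 0 by omega, pow_zero]
  exact LinearMap.range_id

lemma le_filMonodromy (N : M →ₗ[R] M) {b c a : ℤ} (h : b - c = a) :
    filKer N b ⊓ filRange N c ≤ filMonodromy N a :=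
  le_iSup_of_le b (le_iSup_of_le c (le_iSup_of_le h le_rfl))

lemma filMonodromy_le {N : M →ₗ[R] M} {a : ℤ} {P : Submodule R M}
    (h : ∀ b c : ℤ, b - c = a → filKer N b ⊓ filRange N c ≤ P) :
    filMonodromy N a ≤ P :=
  iSup_le fun b => iSup_le fun c => iSup_le fun hbc => h b c hbc

lemma filMonodromy_eq_single (N : M →ₗ[R] M) (a : ℤ) :
    filMonodromy N a = ⨆ b : ℤ, filKer N b ⊓ filRange N (b - a) := by
  apply le_antisymm
  · exact filMonodromy_le fun b c hbc =>
      le_iSup_of_le b (by rw [show b - a = c by omega])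
  · exact iSup_le fun b => le_filMonodromy N (by ring)

theorem filMonodromy_induction (N : M →ₗ[R] M) {a : ℤ} {motive : M → Prop} {x : M}
    (hx : x ∈ filMonodromy N a)
    (mem : ∀ (b : ℤ) (y : M), y ∈ filKer N b → y ∈ filRange N (b - a) → motive y)
    (zero : motive 0) (add : ∀ y z, motive y → motive z → motive (y + z)) : motive x := by
  rw [filMonodromy_eq_single] at hx
  exact Submodule.iSup_induction (motive := motive) _ hx
    (fun b y hy => mem b y ((Submodule.mem_inf.mp hy).1) ((Submodule.mem_inf.mp hy).2)) zero add

lemma filMonodromy_mono (N : M →ₗ[R] M) {a a' : ℤ} (h : a ≤ a') :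
    filMonodromy N a ≤ filMonodromy N a' :=
  filMonodromy_le fun b c hbc =>
    le_trans (inf_le_inf_right _ (filKer_mono N (show b ≤ b + (a' - a) by omega)))
      (le_filMonodromy N (show b + (a' - a) - c = a' by omega))

lemma map_filMonodromy (N : M →ₗ[R] M) (a : ℤ) :
    Submodule.map N (filMonodromy N a) ≤ filMonodromy N (a - 2) := by
  rw [Submodule.map_le_iff_le_comap]
  refine filMonodromy_le fun b c hbc => ?_
  intro x hx
  obtain ⟨hk, hr⟩ := Submodule.mem_inf.mp hx
  rw [Submodule.mem_comap]
  refine le_filMonodromy N (show (b - 1) - (c + 1) = a - 2 by omega)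
    (Submodule.mem_inf.mpr ⟨?_, ?_⟩)
  · rw [mem_filKer] at hk ⊢
    have h1 : (N ^ (b.toNat + 1)) x = 0 := kerPow_mono N (show (b+1).toNat ≤ b.toNat + 1 by omega) hk
    rw [show (b - 1 + 1).toNat = b.toNat by omega]
    calc (N ^ b.toNat) (N x) = (N ^ (b.toNat + 1)) x := by
          rw [powAdd, pow_one]
      _ = 0 := h1
  · rw [mem_filRange] at hr ⊢
    obtain ⟨y, hy⟩ := hr
    refine rangePow_mono N (show (c+1).toNat ≤ c.toNat + 1 by omega) ⟨y, ?_⟩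
    rw [add_comm, powAdd, pow_one, hy]

lemma map_pow_filMonodromy (N : M →ₗ[R] M) (t : ℕ) (a : ℤ) :
    Submodule.map (N ^ t) (filMonodromy N a) ≤ filMonodromy N (a - 2 * t) := by
  induction t generalizing a with
  | zero =>
    rw [pow_zero, Module.End.one_eq_id, Submodule.map_id]
    exact filMonodromy_mono N (by push_cast; omega)
  | succ t ih =>
    have h1 : (N ^ (t + 1)) = N ∘ₗ (N ^ t) := by rw [pow_succ']; rfl
    rw [h1, Submodule.map_comp]
    refine le_trans (Submodule.map_mono (ih a)) (le_trans (map_filMonodromy N _) ?_)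
    exact filMonodromy_mono N (by push_cast; omega)

end Basic

section Nilp

variable {R : Type*} [CommRing R] {M : Type*} [AddCommGroup M] [Module R M]

lemma pow_zero_of_le (N : M →ₗ[R] M) {k : ℕ} (hk : N ^ (k + 1) = 0) {m : ℕ} (h : k + 1 ≤ m) :
    N ^ m = 0 := by
  obtain ⟨d, rfl⟩ := Nat.exists_eq_add_of_le h
  rw [pow_add, hk, zero_mul]

lemma filMonodromy_top (N : M →ₗ[R] M) {k : ℕ} (hk : N ^ (k + 1) = 0) {a : ℤ}
    (ha : (k : ℤ) ≤ a) : filMonodromy N a = ⊤ := by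
  have h1 : filKer N a = ⊤ := by
    refine le_antisymm le_top ?_
    have hker : LinearMap.ker (N ^ (k + 1)) = ⊤ := by rw [hk]; exact LinearMap.ker_zero
    rw [← hker]
    exact kerPow_mono N (by omega)
  refine le_antisymm le_top ?_
  have h2 := le_filMonodromy N (b := a) (c := 0) (by ring)
  rw [h1, filRange_neg N le_rfl, inf_idem] at h2
  exact h2

lemma filMonodromy_bot (N : M →ₗ[R] M) {k : ℕ} (hk : N ^ (k + 1) = 0) {a : ℤ}
    (ha : a ≤ -(k : ℤ) - 1) : filMonodromy N a = ⊥ := by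
  refine le_antisymm (filMonodromy_le fun b c hbc => ?_) bot_le
  rcases le_or_gt b (-1) with hb | hb
  · rw [filKer_neg N hb]
    exact le_trans inf_le_left bot_le
  · refine le_trans inf_le_right ?_
    have hc : (k : ℤ) + 1 ≤ c := by omega
    have : filRange N c ≤ LinearMap.range (N ^ (k + 1)) :=
      rangePow_mono N (by omega)
    rw [hk] at this
    refine le_trans this ?_
    rw [LinearMap.range_zero]

/-- strong surjectivity: `fil_{-a} = N^a (fil_a)` (≤ direction). -/
lemma filMonodromy_surj (N : M →ₗ[R] M) {k : ℕ} (hk : N ^ (k + 1) = 0) (a : ℕ) :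
    filMonodromy N (-(a : ℤ)) ≤ Submodule.map (N ^ a) (filMonodromy N (a : ℤ)) := by
  refine filMonodromy_le fun b c hbc => ?_
  rcases le_or_gt b (-1) with hb | hb
  · rw [filKer_neg N hb]
    exact le_trans inf_le_left bot_le
  · intro x hx
    obtain ⟨hker, hran⟩ := Submodule.mem_inf.mp hx
    have hc : c = b + a := by omega
    set nb := b.toNat with hnb
    have hctn : c.toNat = nb + a := by omega
    obtain ⟨y, hy⟩ := mem_filRange.mp hran
    rw [hctn] at hy
    have hkx : (N ^ (nb + 1)) x = 0 :=
      kerPow_mono N (show (b + 1).toNat ≤ nb + 1 by omega) (mem_filKer.mp hker)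
    refine ⟨(N ^ nb) y, ?_, ?_⟩
    · refine le_filMonodromy N (show ((nb : ℤ) + a) - nb = a by ring)
        (Submodule.mem_inf.mpr ⟨?_, ?_⟩)
      · rw [mem_filKer, show (((nb : ℤ) + a) + 1).toNat = nb + a + 1 by omega]
        have : (N ^ (nb + a + 1)) ((N ^ nb) y) = (N ^ (nb + 1)) ((N ^ (nb + a)) y) := by
          rw [← powAdd, ← powAdd]; ring_nf
        rw [this, hy, hkx]
      · rw [mem_filRange, show ((nb : ℤ)).toNat = nb by omega]
        exact ⟨y, rfl⟩
    · rw [← powAdd, add_comm, hy]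

/-- `fil_{k-1} = ker N^k` when `N^{k+1} = 0`. -/
lemma filMonodromy_top_step (N : M →ₗ[R] M) {k : ℕ} (hk : N ^ (k + 2) = 0) :
    filMonodromy N ((k : ℤ)) = LinearMap.ker (N ^ (k + 1)) := by
  refine le_antisymm (filMonodromy_le fun b c hbc => ?_) ?_
  · rcases le_or_gt b (-1) with hb | hb
    · rw [filKer_neg N hb]
      exact le_trans inf_le_left bot_le
    · intro x hx
      obtain ⟨hker, hran⟩ := Submodule.mem_inf.mp hx
      rw [LinearMap.mem_ker]
      rcases le_or_gt c 0 with hc | hc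
      · have : (b + 1).toNat ≤ k + 1 := by omega
        exact kerPow_mono N this (mem_filKer.mp hker)
      · obtain ⟨y, hy⟩ := mem_filRange.mp hran
        rw [← hy, ← powAdd]
        have : N ^ (k + 1 + c.toNat) = 0 := pow_zero_of_le N hk (by omega)
        rw [this, LinearMap.zero_apply]
  · refine le_trans ?_ (le_filMonodromy N (show (k : ℤ) - 0 = k by ring))
    rw [filRange_neg N le_rfl, filKer_natCast]
    exact le_inf le_rfl le_top

/-- `fil_{-k} = range N^k` when `N^{k+1} = 0`, `k ≥ 1`. -/
lemma filMonodromy_bot_step (N : M →ₗ[R] M) {k : ℕ} (hk : N ^ (k + 2) = 0) :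
    filMonodromy N (-((k : ℤ) + 1)) = LinearMap.range (N ^ (k + 1)) := by
  refine le_antisymm (filMonodromy_le fun b c hbc => ?_) ?_
  · rcases le_or_gt b (-1) with hb | hb
    · rw [filKer_neg N hb]
      exact le_trans inf_le_left bot_le
    · refine le_trans inf_le_right ?_
      have : (k + 1 : ℕ) ≤ c.toNat := by omega
      exact rangePow_mono N this
  · refine le_trans ?_ (le_filMonodromy N (show (0 : ℤ) - ((k : ℤ) + 1) = -((k : ℤ) + 1) by ring))
    refine le_inf ?_ ?_
    · rintro x ⟨y, rfl⟩
      rw [mem_filKer, show ((0 : ℤ) + 1).toNat = 1 by omega, ← powAdd]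
      have h2 : N ^ (1 + (k + 1)) = 0 := pow_zero_of_le N hk (by omega)
      rw [h2, LinearMap.zero_apply]
    · rw [show ((k : ℤ) + 1) = ((k + 1 : ℕ) : ℤ) by push_cast; ring, filRange_natCast]

end Nilp

section Subquot

variable {R : Type*} [CommRing R] {M : Type*} [AddCommGroup M] [Module R M]

variable (N : M →ₗ[R] M) (κ : ℕ)

/-- `ker N^κ`. -/
noncomputable def Ksub : Submodule R M := LinearMap.ker (N ^ κ)

lemma mem_Ksub {x : M} : x ∈ Ksub N κ ↔ (N ^ κ) x = 0 := LinearMap.mem_ker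

lemma Nmaps : ∀ x ∈ Ksub N κ, N x ∈ Ksub N κ := by
  intro x hx
  rw [mem_Ksub] at hx ⊢
  have h1 : (N ^ κ) (N x) = (N ^ (κ + 1)) x := by rw [powAdd, pow_one]
  have h2 : (N ^ (κ + 1)) x = N ((N ^ κ) x) := by rw [add_comm, powAdd, pow_one]
  rw [h1, h2, hx, map_zero]

/-- image of `range N^κ` inside `ker N^κ`. -/
noncomputable def Isub : Submodule R (Ksub N κ) :=
  (LinearMap.range (N ^ κ)).comap (Ksub N κ).subtype

lemma mem_Isub {z : Ksub N κ} : z ∈ Isub N κ ↔ (z : M) ∈ LinearMap.range (N ^ κ) :=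
  Iff.rfl

noncomputable def Nres : Ksub N κ →ₗ[R] Ksub N κ :=
  N.restrict (p := Ksub N κ) (q := Ksub N κ) (Nmaps N κ)

lemma Nres_coe (x : Ksub N κ) : ((Nres N κ) x : M) = N (x : M) := rfl

lemma Nres_pow_coe (t : ℕ) (x : Ksub N κ) : (((Nres N κ) ^ t) x : M) = (N ^ t) (x : M) := by
  induction t generalizing x with
  | zero => simp
  | succ t iht =>
    have h1 : ((Nres N κ) ^ (t + 1)) x = ((Nres N κ) ^ t) ((Nres N κ) x) := by
      rw [powAdd, pow_one]
    rw [h1, iht, Nres_coe, powAdd, pow_one]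

lemma Nres_maps_Isub : Isub N κ ≤ (Isub N κ).comap (Nres N κ) := by
  rintro z hz
  rw [Submodule.mem_comap, mem_Isub, Nres_coe]
  obtain ⟨y, hy⟩ := (mem_Isub N κ).mp hz
  refine ⟨N y, ?_⟩
  have h1 : (N ^ κ) (N y) = (N ^ (κ + 1)) y := by rw [powAdd, pow_one]
  have h2 : (N ^ (κ + 1)) y = N ((N ^ κ) y) := by rw [add_comm, powAdd, pow_one]
  rw [h1, h2, hy]

noncomputable def Nbar : (Ksub N κ ⧸ Isub N κ) →ₗ[R] (Ksub N κ ⧸ Isub N κ) :=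
  Submodule.mapQ _ _ (Nres N κ) (Nres_maps_Isub N κ)

lemma Nbar_mk (x : Ksub N κ) :
    Nbar N κ (Submodule.Quotient.mk x) = Submodule.Quotient.mk ((Nres N κ) x) := by
  rfl

lemma Nbar_pow_mk (t : ℕ) (x : Ksub N κ) :
    ((Nbar N κ) ^ t) (Submodule.Quotient.mk x)
      = Submodule.Quotient.mk (((Nres N κ) ^ t) x) := by
  induction t generalizing x with
  | zero => simp
  | succ t iht =>
    have h1 : ((Nbar N κ) ^ (t + 1)) (Submodule.Quotient.mk x)
        = ((Nbar N κ) ^ t) ((Nbar N κ) (Submodule.Quotient.mk x)) := by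
      rw [powAdd, pow_one]
    have h2 : ((Nres N κ) ^ (t + 1)) x = ((Nres N κ) ^ t) ((Nres N κ) x) := by
      rw [powAdd, pow_one]
    rw [h1, h2, Nbar_mk, iht]

lemma Nbar_nilp : (Nbar N κ) ^ κ = 0 := by
  apply LinearMap.ext
  intro ξ
  obtain ⟨z, rfl⟩ := Submodule.Quotient.mk_surjective _ ξ
  rw [Nbar_pow_mk, LinearMap.zero_apply]
  have hz : ((Nres N κ) ^ κ) z = 0 := by
    apply Subtype.ext
    rw [Nres_pow_coe]
    exact (mem_Ksub N κ).mp z.2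
  rw [hz, Submodule.Quotient.mk_zero]

lemma mk_mem_filKerBar {b : ℤ} (z : Ksub N κ)
    (h : (N ^ (b + 1).toNat) (z : M) ∈ LinearMap.range (N ^ κ)) :
    Submodule.Quotient.mk (p := Isub N κ) z ∈ filKer (Nbar N κ) b := by
  rw [mem_filKer, Nbar_pow_mk, Submodule.Quotient.mk_eq_zero, mem_Isub, Nres_pow_coe]
  exact h

lemma mk_mem_filRangeBar {c : ℤ} (z w : Ksub N κ) (h : (N ^ c.toNat) (w : M) = (z : M)) :
    Submodule.Quotient.mk (p := Isub N κ) z ∈ filRange (Nbar N κ) c := by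
  rw [mem_filRange]
  refine ⟨Submodule.Quotient.mk w, ?_⟩
  rw [Nbar_pow_mk]
  congr 1
  exact Subtype.ext (by rw [Nres_pow_coe]; exact h)

end Subquot

section Star

variable {R : Type*} [CommRing R] {M : Type*} [AddCommGroup M] [Module R M]
variable (N : M →ₗ[R] M) (κ : ℕ)

lemma range_pow_le_filMonodromy (hnil : N ^ (κ + 1) = 0) {a : ℤ} (ha : -(κ : ℤ) ≤ a) :
    LinearMap.range (N ^ κ) ≤ filMonodromy N a := by
  refine le_trans ?_ (filMonodromy_mono N ha)
  refine le_trans ?_ (le_filMonodromy N (show (0 : ℤ) - (κ : ℤ) = -(κ : ℤ) by ring))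
  refine le_inf ?_ ?_
  · rintro x ⟨y, rfl⟩
    rw [mem_filKer, show ((0 : ℤ) + 1).toNat = 1 by omega, pow_one]
    have h1 : N ((N ^ κ) y) = (N ^ (1 + κ)) y := by rw [powAdd, pow_one]
    rw [h1, show 1 + κ = κ + 1 by omega, hnil, LinearMap.zero_apply]
  · rw [show ((κ : ℤ)) = ((κ : ℕ) : ℤ) by norm_num, filRange_natCast]

/-- Core computation used for the (*)→ direction. -/
lemma starCore (hnil : N ^ (κ + 1) = 0) {a : ℤ} (ha : -(κ : ℤ) ≤ a) (nb nc : ℕ)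
    (hnbc : (nb : ℤ) - (nc : ℤ) ≤ a) (zc w u x : M)
    (hzc : (N ^ κ) zc = 0) (hx : x = (N ^ nc) zc + (N ^ κ) w)
    (hker : (N ^ (nb + 1)) x = (N ^ κ) u) :
    x ∈ filMonodromy N a := by
  have hw : (N ^ κ) w ∈ filMonodromy N a :=
    range_pow_le_filMonodromy N κ hnil ha ⟨w, rfl⟩
  have hgen : ∀ y : M, (N ^ (nb + 1)) y = 0 → y ∈ LinearMap.range (N ^ nc) →
      y ∈ filMonodromy N a := by
    intro y h1 h2
    refine filMonodromy_mono N hnbc (le_filMonodromy N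
      (show ((nb : ℕ) : ℤ) - ((nc : ℕ) : ℤ) = (nb : ℤ) - (nc : ℤ) by push_cast; ring) ?_)
    refine Submodule.mem_inf.mpr ⟨?_, ?_⟩
    · rw [mem_filKer, show (((nb : ℕ) : ℤ) + 1).toNat = nb + 1 by omega, h1]
    · rw [filRange_natCast]
      exact h2
  rcases le_or_gt κ (nb + nc + 1) with hcase | hcase
  · -- case A
    have h1 : (N ^ (nb + 1)) ((N ^ nc) zc) = 0 := by
      rw [← powAdd]
      have : nb + 1 + nc = (nb + 1 + nc - κ) + κ := by omega
      rw [this, powAdd, hzc, map_zero]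
    rw [hx]
    exact Submodule.add_mem _ (hgen _ h1 ⟨zc, rfl⟩) hw
  · -- case B : nb + nc + 2 ≤ κ
    set v := u - (N ^ (nb + 1)) w with hv
    have hNv : (N ^ (nb + 1)) ((N ^ nc) zc) = (N ^ κ) v := by
      have e1 : (N ^ (nb + 1)) x = (N ^ (nb + 1)) ((N ^ nc) zc) + (N ^ κ) ((N ^ (nb + 1)) w) := by
        rw [hx, map_add, ← powAdd, ← powAdd, add_comm (nb+1) κ, powAdd N κ (nb+1) w]
      have e2 : (N ^ κ) v = (N ^ κ) u - (N ^ κ) ((N ^ (nb + 1)) w) := by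
        rw [hv, map_sub]
      rw [e2, ← hker, e1]
      abel
    have key1 : (N ^ nc) zc - (N ^ (κ - nb - 1)) v ∈ filMonodromy N a := by
      refine hgen _ ?_ ?_
      · rw [map_sub, hNv, ← powAdd, show nb + 1 + (κ - nb - 1) = κ by omega, sub_self]
      · refine Submodule.sub_mem _ ⟨zc, rfl⟩ ?_
        exact rangePow_mono N (show nc ≤ κ - nb - 1 by omega) ⟨v, rfl⟩
    have key2 : (N ^ (κ - nb - 1)) v ∈ filMonodromy N a := by
      have h2 : (2 * (nb : ℤ) + 2 - κ) ≤ a := by omega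
      refine filMonodromy_mono N h2 (le_filMonodromy N
        (show ((nb : ℤ) + 1) - ((κ : ℤ) - nb - 1) = 2 * (nb : ℤ) + 2 - κ by ring) ?_)
      refine Submodule.mem_inf.mpr ⟨?_, ?_⟩
      · rw [mem_filKer, show (((nb : ℤ) + 1) + 1).toNat = nb + 2 by omega, ← powAdd]
        rw [show nb + 2 + (κ - nb - 1) = κ + 1 by omega, hnil, LinearMap.zero_apply]
      · rw [mem_filRange]
        exact ⟨v, by rw [show ((κ : ℤ) - nb - 1).toNat = κ - nb - 1 by omega]⟩
    have : x = ((N ^ nc) zc - (N ^ (κ - nb - 1)) v) + (N ^ (κ - nb - 1)) v + (N ^ κ) w := by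
      rw [hx]; abel
    rw [this]
    exact Submodule.add_mem _ (Submodule.add_mem _ key1 key2) hw

/-- (*)← : elements of `ker N^κ` whose class lies in the monodromy filtration of the
subquotient lie in the monodromy filtration of `M`. -/
lemma starFrom (hnil : N ^ (κ + 1) = 0) {a : ℤ} (ha : -(κ : ℤ) ≤ a) (y : Ksub N κ)
    (h : Submodule.Quotient.mk (p := Isub N κ) y ∈ filMonodromy (Nbar N κ) a) :
    (y : M) ∈ filMonodromy N a := by
  have main : ∀ ξ : (Ksub N κ ⧸ Isub N κ), ξ ∈ filMonodromy (Nbar N κ) a →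
      ∀ z : Ksub N κ, Submodule.Quotient.mk z = ξ → (z : M) ∈ filMonodromy N a := by
    intro ξ hξ
    refine filMonodromy_induction (Nbar N κ)
      (motive := fun ξ => ∀ z : Ksub N κ, Submodule.Quotient.mk z = ξ →
        (z : M) ∈ filMonodromy N a) hξ ?_ ?_ ?_
    · -- generators
      intro b η hbker hbran z hz
      rcases le_or_gt b (-1) with hb | hb
      · rw [filKer_neg _ hb] at hbker
        have hη : η = 0 := hbker
        rw [hη] at hz
        have hzI : z ∈ Isub N κ := (Submodule.Quotient.mk_eq_zero _).mp hz
        obtain ⟨u, hu⟩ := (mem_Isub N κ).mp hzI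
        exact range_pow_le_filMonodromy N κ hnil ha ⟨u, hu⟩
      · -- b ≥ 0
        set nb := b.toNat with hnb
        rw [← hz] at hbker hbran
        rw [mem_filKer, Nbar_pow_mk, Submodule.Quotient.mk_eq_zero] at hbker
        rw [mem_Isub, Nres_pow_coe, show (b + 1).toNat = nb + 1 by omega] at hbker
        obtain ⟨u, hu⟩ := hbker
        rcases le_or_gt (b - a) 0 with hc | hc
        · -- c ≤ 0 : use zc = z itself
          refine starCore N κ hnil ha nb 0 (by omega) (z : M) 0 u (z : M)
            ((mem_Ksub N κ).mp z.2) (by simp) hu.symm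
        · -- c ≥ 1
          set nc := (b - a).toNat with hnc
          rw [mem_filRange] at hbran
          obtain ⟨η', hη'⟩ := hbran
          obtain ⟨zc, rfl⟩ := Submodule.Quotient.mk_surjective _ η'
          rw [Nbar_pow_mk] at hη'
          have hdiff : ((Nres N κ) ^ (b - a).toNat) zc - z ∈ Isub N κ :=
            (Submodule.Quotient.eq _).mp hη'
          obtain ⟨w, hw⟩ := (mem_Isub N κ).mp hdiff
          have hwco : (N ^ κ) w = (N ^ nc) (zc : M) - (z : M) := by
            rw [hw]
            push_cast
            rw [Nres_pow_coe, hnc]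
          refine starCore N κ hnil ha nb nc (by omega) (zc : M) (-w) u (z : M)
            ((mem_Ksub N κ).mp zc.2) ?_ hu.symm
          rw [map_neg, hwco]
          abel
    · -- zero
      intro z hz
      have hzI : z ∈ Isub N κ := (Submodule.Quotient.mk_eq_zero _).mp hz
      obtain ⟨u, hu⟩ := (mem_Isub N κ).mp hzI
      exact range_pow_le_filMonodromy N κ hnil ha ⟨u, hu⟩
    · -- add
      intro ξ₁ ξ₂ h₁ h₂ z hz
      obtain ⟨z₁, hz₁⟩ := Submodule.Quotient.mk_surjective _ ξ₁
      have hz₂ : Submodule.Quotient.mk (p := Isub N κ) (z - z₁) = ξ₂ := by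
        rw [Submodule.Quotient.mk_sub, hz, hz₁]
        abel
      have m1 := h₁ z₁ hz₁
      have m2 := h₂ (z - z₁) hz₂
      have : (z : M) = (z₁ : M) + ((z - z₁ : Ksub N κ) : M) := by
        push_cast
        abel
      rw [this]
      exact Submodule.add_mem _ m1 m2
  exact main _ h y rfl

/-- (*)→ : the monodromy filtration of `M` maps into that of the subquotient. -/
lemma starTo (hnil : N ^ (κ + 1) = 0) {a : ℤ} (ha : a ≤ (κ : ℤ) - 1) {x : M}
    (hx : x ∈ filMonodromy N a) :
    ∃ hxk : x ∈ Ksub N κ,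
      Submodule.Quotient.mk (p := Isub N κ) ⟨x, hxk⟩ ∈ filMonodromy (Nbar N κ) a := by
  refine filMonodromy_induction N
    (motive := fun y => ∃ hyk : y ∈ Ksub N κ,
      Submodule.Quotient.mk (p := Isub N κ) ⟨y, hyk⟩ ∈ filMonodromy (Nbar N κ) a)
    hx ?_ ?_ ?_
  · -- generators
    intro b y hyk hyr
    rcases le_or_gt b (-1) with hb | hb
    · rw [filKer_neg _ hb] at hyk
      have hy0 : y = 0 := hyk
      subst hy0
      exact ⟨Submodule.zero_mem _, by
        rw [show (⟨0, Submodule.zero_mem _⟩ : Ksub N κ) = 0 from rfl,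
          Submodule.Quotient.mk_zero]
        exact Submodule.zero_mem _⟩
    · -- b ≥ 0
      set nb := b.toNat with hnb
      have hyker : (N ^ (nb + 1)) y = 0 := by
        have := mem_filKer.mp hyk
        rwa [show (b + 1).toNat = nb + 1 by omega] at this
      rcases le_or_gt (b - a) 0 with hc | hc
      · -- c ≤ 0, so b ≤ a ≤ κ - 1, hence nb + 1 ≤ κ
        have hyK : y ∈ Ksub N κ := by
          rw [mem_Ksub]
          have h1 : (N ^ κ) y = (N ^ (κ - (nb+1))) ((N ^ (nb+1)) y) := by
            rw [← powAdd, show κ - (nb+1) + (nb+1) = κ by omega]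
          rw [h1, hyker, map_zero]
        refine ⟨hyK, ?_⟩
        refine le_filMonodromy (Nbar N κ) (show b - (b - a) = a by ring)
          (Submodule.mem_inf.mpr ⟨?_, ?_⟩)
        · exact mk_mem_filKerBar N κ _ (by
            rw [show (b + 1).toNat = nb + 1 by omega]
            show (N ^ (nb+1)) y ∈ _
            rw [hyker]
            exact Submodule.zero_mem _)
        · rw [filRange_neg _ hc]
          exact Submodule.mem_top
      · -- c ≥ 1
        set nc := (b - a).toNat with hnc
        obtain ⟨z, hz⟩ := mem_filRange.mp hyr
        rw [show (b - a).toNat = nc from rfl] at hz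
        rcases le_or_gt (nb + 1 + nc) κ with hcase | hcase
        · -- small case
          have hzK : z ∈ Ksub N κ := by
            rw [mem_Ksub]
            have h1 : (N ^ (nb + 1 + nc)) z = 0 := by
              rw [powAdd, hz, hyker]
            have h2 : (N ^ κ) z = (N ^ (κ - (nb+1+nc))) ((N ^ (nb+1+nc)) z) := by
              rw [← powAdd, show κ - (nb+1+nc) + (nb+1+nc) = κ by omega]
            rw [h2, h1, map_zero]
          have hyK : y ∈ Ksub N κ := by
            rw [mem_Ksub]
            have h1 : (N ^ κ) y = (N ^ (κ - (nb+1))) ((N ^ (nb+1)) y) := by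
              rw [← powAdd, show κ - (nb+1) + (nb+1) = κ by omega]
            rw [h1, hyker, map_zero]
          refine ⟨hyK, ?_⟩
          refine le_filMonodromy (Nbar N κ) (show b - (b - a) = a by ring)
            (Submodule.mem_inf.mpr ⟨?_, ?_⟩)
          · exact mk_mem_filKerBar N κ _ (by
              rw [show (b + 1).toNat = nb + 1 by omega]
              show (N ^ (nb+1)) y ∈ _
              rw [hyker]
              exact Submodule.zero_mem _)
          · exact mk_mem_filRangeBar N κ _ ⟨z, hzK⟩ (by
              rw [show (b - a).toNat = nc from rfl]
              exact hz)
        · -- large case : κ ≤ nb + nc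
          have hyK : y ∈ Ksub N κ := by
            rw [mem_Ksub, ← hz, ← powAdd]
            rw [pow_zero_of_le N hnil (show κ + 1 ≤ κ + nc by omega), LinearMap.zero_apply]
          refine ⟨hyK, ?_⟩
          rcases le_or_gt κ nc with hnck | hnck
          · -- nc ≥ κ : class is zero
            have hmem : (⟨y, hyK⟩ : Ksub N κ) ∈ Isub N κ := by
              rw [mem_Isub]
              exact rangePow_mono N hnck ⟨z, hz⟩
            rw [(Submodule.Quotient.mk_eq_zero _).mpr hmem]
            exact Submodule.zero_mem _
          · -- nc < κ : shifted generator
            have hab : (nb : ℤ) - (nc : ℤ) = a := by omega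
            refine le_filMonodromy (Nbar N κ)
              (show ((κ : ℤ) - nc - 1) - (((κ : ℤ) - nc - 1) - a) = a by ring)
              (Submodule.mem_inf.mpr ⟨?_, ?_⟩)
            · refine mk_mem_filKerBar N κ _ ?_
              rw [show (((κ : ℤ) - nc - 1) + 1).toNat = κ - nc by omega]
              refine ⟨z, ?_⟩
              show (N ^ κ) z = (N ^ (κ - nc)) y
              rw [← hz, ← powAdd, show κ - nc + nc = κ by omega]
            · rcases le_or_gt ((κ : ℤ) - nc - 1 - a) 0 with hcp | hcp
              · rw [filRange_neg _ hcp]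
                exact Submodule.mem_top
              · set ncp := ((κ : ℤ) - nc - 1 - a).toNat with hncp
                have hwK : (N ^ (nc - ncp)) z ∈ Ksub N κ := by
                  rw [mem_Ksub, ← powAdd]
                  rw [pow_zero_of_le N hnil (show κ + 1 ≤ κ + (nc - ncp) by omega),
                    LinearMap.zero_apply]
                refine mk_mem_filRangeBar N κ _ ⟨_, hwK⟩ ?_
                show (N ^ ((κ : ℤ) - nc - 1 - a).toNat) ((N ^ (nc - ncp)) z) = y
                rw [← hncp, ← powAdd, show ncp + (nc - ncp) = nc by omega, hz]
  · exact ⟨Submodule.zero_mem _, by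
      rw [show (⟨0, Submodule.zero_mem _⟩ : Ksub N κ) = 0 from rfl, Submodule.Quotient.mk_zero]
      exact Submodule.zero_mem _⟩
  · rintro y z ⟨hyK, hy⟩ ⟨hzK, hz⟩
    refine ⟨Submodule.add_mem _ hyK hzK, ?_⟩
    have : (⟨y + z, Submodule.add_mem _ hyK hzK⟩ : Ksub N κ)
        = ⟨y, hyK⟩ + ⟨z, hzK⟩ := rfl
    rw [this, Submodule.Quotient.mk_add]
    exact Submodule.add_mem _ hy hz

end Star

section KL

universe u v

/-- Key lemma (gr-injectivity of `N^a`): if `x ∈ fil_a` and `N^a x = 0` then `x ∈ fil_{a-1}`. -/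
theorem kl {R : Type u} [CommRing R] : ∀ (k : ℕ), ∀ {M : Type v} [AddCommGroup M] [Module R M],
    ∀ (N : M →ₗ[R] M), N ^ (k + 1) = 0 → ∀ (a : ℕ) (x : M),
      x ∈ filMonodromy N (a : ℤ) → (N ^ a) x = 0 → x ∈ filMonodromy N ((a : ℤ) - 1) := by
  intro k
  induction k with
  | zero =>
    intro M _ _ N hnil a x hx hax
    rcases Nat.eq_zero_or_pos a with ha | ha
    · subst ha
      rw [pow_zero, Module.End.one_apply] at hax
      rw [hax]
      exact Submodule.zero_mem _
    · rw [filMonodromy_top N hnil (show ((0 : ℕ) : ℤ) ≤ (a : ℤ) - 1 by omega)]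
      exact Submodule.mem_top
  | succ k ih =>
    intro M _ _ N hnil a x hx hax
    rcases lt_or_ge (a : ℤ) ((k : ℤ) + 1) with hak | hak
    · -- a ≤ k, use the subquotient
      obtain ⟨hxk, hmk⟩ := starTo N (k + 1) hnil
        (show (a : ℤ) ≤ ((k + 1 : ℕ) : ℤ) - 1 by push_cast; omega) hx
      have hnilbar : (Nbar N (k + 1)) ^ (k + 1) = 0 := Nbar_nilp N (k + 1)
      have h2 : ((Nbar N (k + 1)) ^ a) (Submodule.Quotient.mk ⟨x, hxk⟩) = 0 := by
        rw [Nbar_pow_mk]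
        have : ((Nres N (k + 1)) ^ a) ⟨x, hxk⟩ = 0 := by
          apply Subtype.ext
          rw [Nres_pow_coe]
          exact hax
        rw [this, Submodule.Quotient.mk_zero]
      have h3 := ih (Nbar N (k + 1)) hnilbar a _ hmk h2
      exact starFrom N (k + 1) hnil
        (show -(((k + 1 : ℕ)) : ℤ) ≤ (a : ℤ) - 1 by push_cast; omega) ⟨x, hxk⟩ h3
    · rcases eq_or_lt_of_le hak with hak' | hak'
      · -- a = k + 1
        rw [show (a : ℤ) - 1 = (k : ℤ) by omega, filMonodromy_top_step N hnil,
          LinearMap.mem_ker]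
        have : a = k + 1 := by omega
        rw [← this]
        exact hax
      · -- a ≥ k + 2
        rw [filMonodromy_top N hnil (show ((k + 1 : ℕ) : ℤ) ≤ (a : ℤ) - 1 by push_cast; omega)]
        exact Submodule.mem_top

/-- Full gr-injectivity. -/
theorem fil_inj {R : Type u} [CommRing R] {M : Type v} [AddCommGroup M] [Module R M]
    (N : M →ₗ[R] M) {k : ℕ} (hnil : N ^ (k + 1) = 0) (a : ℕ) (x : M)
    (hx : x ∈ filMonodromy N (a : ℤ)) (h : (N ^ a) x ∈ filMonodromy N (-(a : ℤ) - 1)) :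
    x ∈ filMonodromy N ((a : ℤ) - 1) := by
  have hsurj := filMonodromy_surj N hnil (a + 1)
  have h' : (N ^ a) x ∈ filMonodromy N (-((a + 1 : ℕ) : ℤ)) := by
    rwa [show (-((a + 1 : ℕ) : ℤ)) = -(a : ℤ) - 1 by push_cast; ring]
  obtain ⟨w, hw, hww⟩ := hsurj h'
  have hNw : N w ∈ filMonodromy N ((a : ℤ) - 1) := by
    have := map_filMonodromy N ((a + 1 : ℕ) : ℤ) ⟨w, hw, rfl⟩
    rwa [show ((a + 1 : ℕ) : ℤ) - 2 = (a : ℤ) - 1 by push_cast; ring] at this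
  have hxNw : x - N w ∈ filMonodromy N (a : ℤ) := by
    refine Submodule.sub_mem _ hx (filMonodromy_mono N (by omega) hNw)
  have hker : (N ^ a) (x - N w) = 0 := by
    rw [map_sub]
    have h1 : (N ^ a) (N w) = (N ^ (a + 1)) w := by rw [powAdd, pow_one]
    rw [h1, hww, sub_self]
  have hmain := kl k N hnil a (x - N w) hxNw hker
  have : x = (x - N w) + N w := by abel
  rw [this]
  exact Submodule.add_mem _ hmain hNw

end KL

section Unique

universe u v

variable {R : Type u} [CommRing R] {M : Type v} [AddCommGroup M] [Module R M]

lemma GmapPow (N : M →ₗ[R] M) (G : ℤ → Submodule R M) (Gmono : Monotone G)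
    (Gmap : ∀ a, Submodule.map N (G a) ≤ G (a - 2)) (t : ℕ) (a : ℤ) :
    Submodule.map (N ^ t) (G a) ≤ G (a - 2 * t) := by
  induction t generalizing a with
  | zero =>
    rw [pow_zero, Module.End.one_eq_id, Submodule.map_id]
    exact Gmono (by push_cast; omega)
  | succ t ih =>
    have h1 : (N ^ (t + 1)) = N ∘ₗ (N ^ t) := by rw [pow_succ']; rfl
    rw [h1, Submodule.map_comp]
    refine le_trans (Submodule.map_mono (ih a)) (le_trans (Gmap _) (Gmono ?_))
    push_cast; omega

lemma G_descend (N : M →ₗ[R] M) (G : ℤ → Submodule R M)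
    (Ginj : ∀ (a : ℕ) (x : M), x ∈ G (a : ℤ) → (N ^ a) x ∈ G (-(a : ℤ) - 1) → x ∈ G ((a : ℤ) - 1))
    (nb : ℕ) (x : M) (hker : (N ^ (nb + 1)) x = 0) :
    ∀ (j : ℕ), x ∈ G ((nb : ℤ) + j) → x ∈ G (nb : ℤ) := by
  intro j
  induction j with
  | zero => simpa using id
  | succ j ih =>
    intro hx
    have h0 : (N ^ (nb + j + 1)) x = 0 := by
      rw [show nb + j + 1 = j + (nb + 1) by omega, powAdd, hker, map_zero]
    have h1 : x ∈ G (((nb + j + 1 : ℕ) : ℤ)) := by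
      rwa [show ((nb + j + 1 : ℕ) : ℤ) = (nb : ℤ) + (j + 1) by push_cast; ring]
    have h2 := Ginj (nb + j + 1) x h1 (by rw [h0]; exact Submodule.zero_mem _)
    refine ih ?_
    rwa [show ((nb + j + 1 : ℕ) : ℤ) - 1 = (nb : ℤ) + j by push_cast; ring] at h2
  
lemma G_ker_le (N : M →ₗ[R] M) {k : ℕ} (hnil : N ^ (k + 1) = 0) (G : ℤ → Submodule R M)
    (Gmono : Monotone G) (Gtop : ∃ t, G t = ⊤)
    (Ginj : ∀ (a : ℕ) (x : M), x ∈ G (a : ℤ) → (N ^ a) x ∈ G (-(a : ℤ) - 1) → x ∈ G ((a : ℤ) - 1))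
    (nb : ℕ) : LinearMap.ker (N ^ (nb + 1)) ≤ G (nb : ℤ) := by
  intro x hx
  rw [LinearMap.mem_ker] at hx
  -- first, G is eventually ⊤ at (nb + k)
  obtain ⟨t, ht⟩ := Gtop
  have htop : G ((nb : ℤ) + (k + (t - (nb : ℤ) - k).toNat)) = ⊤ := by
    refine le_antisymm le_top ?_
    rw [← ht]
    refine Gmono (by omega)
  exact G_descend N G Ginj nb x hx _ (htop ▸ Submodule.mem_top)

lemma Gtop' (N : M →ₗ[R] M) {k : ℕ} (hnil : N ^ (k + 1) = 0) (G : ℤ → Submodule R M)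
    (Gmono : Monotone G) (Gtop : ∃ t, G t = ⊤)
    (Ginj : ∀ (a : ℕ) (x : M), x ∈ G (a : ℤ) → (N ^ a) x ∈ G (-(a : ℤ) - 1) → x ∈ G ((a : ℤ) - 1))
    {a : ℤ} (ha : (k : ℤ) ≤ a) : G a = ⊤ := by
  refine le_antisymm le_top ?_
  intro x _
  have hx : x ∈ G (k : ℤ) :=
    G_ker_le N hnil G Gmono Gtop Ginj k
      (by rw [LinearMap.mem_ker, hnil]; rfl)
  exact Gmono ha hx

lemma Gbot' (N : M →ₗ[R] M) {k : ℕ} (hnil : N ^ (k + 1) = 0) (G : ℤ → Submodule R M)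
    (Gmono : Monotone G) (Gbot : ∃ s, G s = ⊥)
    (Gsurj : ∀ (a : ℕ), G (-(a : ℤ)) ≤ Submodule.map (N ^ a) (G (a : ℤ)) ⊔ G (-(a : ℤ) - 1))
    {a : ℤ} (ha : a ≤ -(k : ℤ) - 1) : G a = ⊥ := by
  have step : ∀ (j : ℕ), G (-(k : ℤ) - 1) ≤ G (-(k : ℤ) - 1 - j) := by
    intro j
    induction j with
    | zero => simp
    | succ j ih =>
      refine le_trans ih ?_
      have h1 : -(k : ℤ) - 1 - j = -(((k + 1 + j : ℕ)) : ℤ) := by push_cast; ring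
      rw [h1]
      refine le_trans (Gsurj (k + 1 + j)) ?_
      rw [pow_zero_of_le N hnil (by omega), Submodule.map_zero, bot_sup_eq]
      exact Gmono (by push_cast; omega)
  obtain ⟨s, hs⟩ := Gbot
  refine le_antisymm ?_ bot_le
  refine le_trans (Gmono ha) ?_
  refine le_trans (step ((-(k : ℤ) - 1 - s).toNat)) ?_
  rw [← hs]
  exact Gmono (by omega)

/-- Half 1 of uniqueness: the closed formula is contained in any admissible filtration. -/
lemma half1 (N : M →ₗ[R] M) {k : ℕ} (hnil : N ^ (k + 1) = 0) (G : ℤ → Submodule R M)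
    (Gmono : Monotone G)
    (Gmap : ∀ a, Submodule.map N (G a) ≤ G (a - 2))
    (Gtop : ∃ t, G t = ⊤)
    (Ginj : ∀ (a : ℕ) (x : M), x ∈ G (a : ℤ) → (N ^ a) x ∈ G (-(a : ℤ) - 1) → x ∈ G ((a : ℤ) - 1))
    (a : ℤ) : filMonodromy N a ≤ G a := by
  refine filMonodromy_le fun b c hbc => ?_
  rcases le_or_gt b (-1) with hb | hb
  · rw [filKer_neg _ hb]
    exact le_trans inf_le_left bot_le
  · intro x hx
    obtain ⟨hker, hran⟩ := Submodule.mem_inf.mp hx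
    set nb := b.toNat with hnb
    have hkx : (N ^ (nb + 1)) x = 0 := by
      have := mem_filKer.mp hker
      rwa [show (b + 1).toNat = nb + 1 by omega] at this
    rcases le_or_gt c 0 with hc | hc
    · have h1 : x ∈ G (nb : ℤ) := G_ker_le N hnil G Gmono Gtop Ginj nb hkx
      exact Gmono (by omega) h1
    · set nc := c.toNat with hnc
      obtain ⟨z, hz⟩ := mem_filRange.mp hran
      rw [show c.toNat = nc from rfl] at hz
      have hzker : (N ^ (nb + nc + 1)) z = 0 := by
        rw [show nb + nc + 1 = nb + 1 + nc by omega, powAdd, hz, hkx]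
      have hzG : z ∈ G ((nb + nc : ℕ) : ℤ) :=
        G_ker_le N hnil G Gmono Gtop Ginj (nb + nc) (by rw [show nb + nc + 1 = nb + nc + 1 from rfl]; exact hzker)
      have hxG : x ∈ G (((nb + nc : ℕ) : ℤ) - 2 * nc) :=
        GmapPow N G Gmono Gmap nc _ ⟨z, hzG, hz⟩
      refine Gmono (by push_cast; omega) hxG

end Unique

section UniqueMain

universe u v

variable {R : Type u} [CommRing R]

/-- The star lemmas combined: the closed-formula filtration of the subquotient is the image
of the closed-formula filtration of `M`, in the middle range. -/
lemma bar_fil {M : Type v} [AddCommGroup M] [Module R M] (N : M →ₗ[R] M) (κ : ℕ)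
    (hnil : N ^ (κ + 1) = 0) {a : ℤ} (h₁ : -(κ : ℤ) ≤ a) (h₂ : a ≤ (κ : ℤ) - 1) :
    Submodule.map (Isub N κ).mkQ (Submodule.comap (Ksub N κ).subtype (filMonodromy N a))
      = filMonodromy (Nbar N κ) a := by
  apply le_antisymm
  · rintro ξ ⟨z, hz, rfl⟩
    replace hz : (z : M) ∈ filMonodromy N a := hz
    obtain ⟨hxk, hmem⟩ := starTo N κ hnil h₂ hz
    rw [Submodule.mkQ_apply]
    have : (⟨(z : M), hxk⟩ : Ksub N κ) = z := Subtype.ext rfl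
    rwa [this] at hmem
  · intro ξ hξ
    obtain ⟨z, rfl⟩ := Submodule.Quotient.mk_surjective _ ξ
    have := starFrom N κ hnil h₁ z hξ
    exact ⟨z, this, Submodule.mkQ_apply _ _⟩

lemma bar_ext {M : Type v} [AddCommGroup M] [Module R M] (N : M →ₗ[R] M) (κ : ℕ)
    (P Q : Submodule R M) (hPK : P ≤ Ksub N κ) (hQK : Q ≤ Ksub N κ)
    (hkP : LinearMap.range (N ^ κ) ≤ P) (hkQ : LinearMap.range (N ^ κ) ≤ Q)
    (h : Submodule.map (Isub N κ).mkQ (Submodule.comap (Ksub N κ).subtype P)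
       = Submodule.map (Isub N κ).mkQ (Submodule.comap (Ksub N κ).subtype Q)) : P = Q := by
  have hIP : Isub N κ ≤ Submodule.comap (Ksub N κ).subtype P :=
    Submodule.comap_mono hkP
  have hIQ : Isub N κ ≤ Submodule.comap (Ksub N κ).subtype Q :=
    Submodule.comap_mono hkQ
  have h2 : Submodule.comap (Ksub N κ).subtype P = Submodule.comap (Ksub N κ).subtype Q := by
    have e1 := congrArg (Submodule.comap (Isub N κ).mkQ) h
    rw [Submodule.comap_map_mkQ, Submodule.comap_map_mkQ, sup_eq_right.mpr hIP,
      sup_eq_right.mpr hIQ] at e1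
    exact e1
  have e2 := congrArg (Submodule.map (Ksub N κ).subtype) h2
  rwa [Submodule.map_comap_subtype, Submodule.map_comap_subtype,
    inf_eq_right.mpr hPK, inf_eq_right.mpr hQK] at e2

theorem fil_unique : ∀ (k : ℕ), ∀ {M : Type v} [AddCommGroup M] [Module R M],
    ∀ (N : M →ₗ[R] M), N ^ (k + 1) = 0 → ∀ (G : ℤ → Submodule R M),
    Monotone G →
    (∀ a, Submodule.map N (G a) ≤ G (a - 2)) →
    (∃ t, G t = ⊤) → (∃ s, G s = ⊥) →
    (∀ (a : ℕ) (x : M), x ∈ G (a : ℤ) → (N ^ a) x ∈ G (-(a : ℤ) - 1) → x ∈ G ((a : ℤ) - 1)) →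
    (∀ (a : ℕ), G (-(a : ℤ)) ≤ Submodule.map (N ^ a) (G (a : ℤ)) ⊔ G (-(a : ℤ) - 1)) →
    ∀ a, G a = filMonodromy N a := by
  intro k
  induction k with
  | zero =>
    intro M _ _ N hnil G Gmono Gmap Gtop Gbot Ginj Gsurj a
    rcases le_or_gt 0 a with ha | ha
    · rw [Gtop' N hnil G Gmono Gtop Ginj (by exact_mod_cast ha),
        filMonodromy_top N hnil (by exact_mod_cast ha)]
    · rw [Gbot' N hnil G Gmono Gbot Gsurj (by omega), filMonodromy_bot N hnil (by omega)]
  | succ k ih =>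
    intro M _ _ N hnil G Gmono Gmap Gtop Gbot Ginj Gsurj a
    set κ := k + 1 with hκ
    have hGtop : ∀ b : ℤ, (κ : ℤ) ≤ b → G b = ⊤ := fun b hb =>
      Gtop' N hnil G Gmono Gtop Ginj (by push_cast; omega)
    have hGbot : ∀ b : ℤ, b ≤ -(κ : ℤ) - 1 → G b = ⊥ := fun b hb =>
      Gbot' N hnil G Gmono Gbot Gsurj (by push_cast; omega)
    have hGK1 : G ((κ : ℤ) - 1) = LinearMap.ker (N ^ κ) := by
      apply le_antisymm
      · intro x hx
        rw [LinearMap.mem_ker]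
        have h1 : (N ^ κ) x ∈ G ((κ : ℤ) - 1 - 2 * κ) :=
          GmapPow N G Gmono Gmap κ _ ⟨x, hx, rfl⟩
        have h2 : G ((κ : ℤ) - 1 - 2 * κ) = ⊥ := hGbot _ (by omega)
        rw [h2] at h1
        simpa using h1
      · have := G_ker_le N hnil G Gmono Gtop Ginj k
        rwa [show (k : ℤ) = (κ : ℤ) - 1 by omega, show k + 1 = κ from rfl] at this
    have hGmK : G (-(κ : ℤ)) = LinearMap.range (N ^ κ) := by
      apply le_antisymm
      · refine le_trans (Gsurj κ) ?_
        rw [hGbot (-(κ : ℤ) - 1) (by omega), sup_bot_eq]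
        exact le_trans (Submodule.map_mono le_top) (by rw [Submodule.map_top])
      · have h1 : LinearMap.range (N ^ κ) = Submodule.map (N ^ κ) (G (κ : ℤ)) := by
          rw [hGtop (κ : ℤ) le_rfl, Submodule.map_top]
        rw [h1]
        refine le_trans (GmapPow N G Gmono Gmap κ _) (Gmono (by push_cast; omega))
    have hFK1 : filMonodromy N ((κ : ℤ) - 1) = LinearMap.ker (N ^ κ) := by
      have := filMonodromy_top_step N (show N ^ (k + 2) = 0 from hnil)
      rwa [show (k : ℤ) = (κ : ℤ) - 1 by omega, show k + 1 = κ from rfl] at this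
    have hFmK : filMonodromy N (-(κ : ℤ)) = LinearMap.range (N ^ κ) := by
      have := filMonodromy_bot_step N (show N ^ (k + 2) = 0 from hnil)
      rwa [show -((k : ℤ) + 1) = -(κ : ℤ) by push_cast; omega,
        show k + 1 = κ from rfl] at this
    rcases le_or_gt (κ : ℤ) a with hrange | hrange
    · rw [hGtop a hrange, filMonodromy_top N hnil hrange]
    rcases le_or_gt a (-(κ : ℤ) - 1) with hrange' | hrange'
    · rw [hGbot a hrange', filMonodromy_bot N hnil hrange']
    -- middle range : -κ ≤ a ≤ κ - 1
    set Gbar : ℤ → Submodule R (Ksub N κ ⧸ Isub N κ) :=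
      fun b => Submodule.map (Isub N κ).mkQ (Submodule.comap (Ksub N κ).subtype (G b))
      with hGbar
    have hGsubK : ∀ b : ℤ, b ≤ (κ : ℤ) - 1 → G b ≤ Ksub N κ := by
      intro b hb
      rw [show Ksub N κ = LinearMap.ker (N ^ κ) from rfl, ← hGK1]
      exact Gmono hb
    have hGsupr : ∀ b : ℤ, -(κ : ℤ) ≤ b → LinearMap.range (N ^ κ) ≤ G b := by
      intro b hb
      rw [← hGmK]
      exact Gmono hb
    -- verify the axioms for Gbar
    have barmono : Monotone Gbar := fun b b' hbb =>
      Submodule.map_mono (Submodule.comap_mono (Gmono hbb))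
    have barmap : ∀ b, Submodule.map (Nbar N κ) (Gbar b) ≤ Gbar (b - 2) := by
      rintro b _ ⟨_, ⟨z, hz, rfl⟩, rfl⟩
      replace hz : (z : M) ∈ G b := hz
      rw [Submodule.mkQ_apply, Nbar_mk]
      refine ⟨Nres N κ z, ?_, Submodule.mkQ_apply _ _⟩
      exact Gmap b ⟨(z : M), hz, (Nres_coe N κ z).symm⟩
    have bartop : ∃ t, Gbar t = ⊤ := by
      refine ⟨(κ : ℤ), ?_⟩
      rw [hGbar]
      simp only
      rw [hGtop (κ : ℤ) le_rfl, Submodule.comap_top, Submodule.map_top,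
        Submodule.range_mkQ]
    have barbot : ∃ s, Gbar s = ⊥ := by
      refine ⟨-(κ : ℤ), ?_⟩
      rw [hGbar]
      simp only
      rw [hGmK]
      have : Submodule.comap (Ksub N κ).subtype (LinearMap.range (N ^ κ)) = Isub N κ := rfl
      rw [this, Submodule.mkQ_map_self]
    have barinj : ∀ (b : ℕ) (ξ : Ksub N κ ⧸ Isub N κ), ξ ∈ Gbar (b : ℤ) →
        ((Nbar N κ) ^ b) ξ ∈ Gbar (-(b : ℤ) - 1) → ξ ∈ Gbar ((b : ℤ) - 1) := by
      intro b ξ hξ hNξ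
      obtain ⟨z, hz, rfl⟩ := hξ
      replace hz : (z : M) ∈ G (b : ℤ) := hz
      rcases le_or_gt (κ : ℤ) (b : ℤ) with hbκ | hbκ
      · refine ⟨z, ?_, rfl⟩
        have h1 : (z : M) ∈ LinearMap.ker (N ^ κ) := z.2
        rw [← hGK1] at h1
        exact Gmono (by omega) h1
      · rw [Submodule.mkQ_apply, Nbar_pow_mk] at hNξ
        obtain ⟨z', hz', hmk⟩ := hNξ
        replace hz' : (z' : M) ∈ G (-(b : ℤ) - 1) := hz'
        rw [Submodule.mkQ_apply] at hmk
        have hdiff : z' - ((Nres N κ) ^ b) z ∈ Isub N κ := (Submodule.Quotient.eq _).mp hmk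
        obtain ⟨w, hw⟩ := (mem_Isub N κ).mp hdiff
        have hsub : ((z' - ((Nres N κ) ^ b) z : Ksub N κ) : M)
            = (z' : M) - (N ^ b) (z : M) := by
          rw [Submodule.coe_sub, Nres_pow_coe]
        rw [hsub] at hw
        have hNb : (N ^ b) (z : M) ∈ G (-(b : ℤ) - 1) := by
          have h2 : (N ^ b) (z : M) = (z' : M) - (N ^ κ) w := by rw [hw]; abel
          rw [h2]
          exact Submodule.sub_mem _ hz' (hGsupr _ (by omega) ⟨w, rfl⟩)
        exact ⟨z, Submodule.mem_comap.mpr (Ginj b (z : M) hz hNb), rfl⟩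
    have barsurj : ∀ (b : ℕ), Gbar (-(b : ℤ)) ≤
        Submodule.map ((Nbar N κ) ^ b) (Gbar (b : ℤ)) ⊔ Gbar (-(b : ℤ) - 1) := by
      intro b ξ hξ
      obtain ⟨z, hz, rfl⟩ := hξ
      replace hz : (z : M) ∈ G (-(b : ℤ)) := hz
      rcases le_or_gt (κ : ℤ) (b : ℤ) with hbκ | hbκ
      · have h1 : (z : M) ∈ LinearMap.range (N ^ κ) := by
          rw [← hGmK]
          exact Gmono (by omega) hz
        have h2 : (Isub N κ).mkQ z = 0 := by
          rw [Submodule.mkQ_apply, Submodule.Quotient.mk_eq_zero]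
          exact (mem_Isub N κ).mpr h1
        rw [h2]
        exact Submodule.zero_mem _
      · have h1 := Gsurj b hz
        rw [Submodule.mem_sup] at h1
        obtain ⟨y, hy, u, hu, huy⟩ := h1
        obtain ⟨w, hwG, hwy⟩ := hy
        have hwK : w ∈ Ksub N κ := hGsubK (b : ℤ) (by omega) hwG
        have huK : u ∈ Ksub N κ := hGsubK (-(b : ℤ) - 1) (by omega) hu
        have hzeq : z = ((Nres N κ) ^ b) ⟨w, hwK⟩ + ⟨u, huK⟩ := by
          apply Subtype.ext
          rw [Submodule.coe_add, Nres_pow_coe]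
          rw [show ((⟨w, hwK⟩ : Ksub N κ) : M) = w from rfl,
            show ((⟨u, huK⟩ : Ksub N κ) : M) = u from rfl, hwy, huy]
        rw [Submodule.mkQ_apply, hzeq, Submodule.Quotient.mk_add]
        refine Submodule.add_mem_sup ?_ ?_
        · refine ⟨Submodule.Quotient.mk ⟨w, hwK⟩, ?_, Nbar_pow_mk N κ b _⟩
          exact ⟨⟨w, hwK⟩, Submodule.mem_comap.mpr hwG, Submodule.mkQ_apply _ _⟩
        · exact ⟨⟨u, huK⟩, Submodule.mem_comap.mpr hu, Submodule.mkQ_apply _ _⟩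
    have ihbar := ih (Nbar N κ) (Nbar_nilp N κ) Gbar barmono barmap bartop barbot barinj barsurj
    refine bar_ext N κ (G a) (filMonodromy N a) (hGsubK a (by omega)) ?_ (hGsupr a (by omega))
      ?_ ?_
    · rw [show Ksub N κ = LinearMap.ker (N ^ κ) from rfl, ← hFK1]
      exact filMonodromy_mono N (by omega)
    · rw [← hFmK]
      exact filMonodromy_mono N (by omega)
    · rw [show Submodule.map (Isub N κ).mkQ (Submodule.comap (Ksub N κ).subtype (G a))
          = Gbar a from rfl, ihbar a, ← bar_fil N κ hnil (by omega) (by omega)]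

end UniqueMain

section Final

variable {R : Type*} [CommRing R] {M : Type*} [AddCommGroup M] [Module R M]

lemma restrict_pow_coe (N : M →ₗ[R] M) (p : Submodule R M) (h : ∀ x ∈ p, N x ∈ p) (t : ℕ)
    (x : p) : (((N.restrict h) ^ t) x : M) = (N ^ t) (x : M) := by
  induction t generalizing x with
  | zero => simp
  | succ t iht =>
    have h1 : ((N.restrict h) ^ (t + 1)) x = ((N.restrict h) ^ t) ((N.restrict h) x) := by
      rw [powAdd, pow_one]
    rw [h1, iht, powAdd, pow_one]
    rfl

lemma mapQ_pow_mk (N : M →ₗ[R] M) (p : Submodule R M) (h : p ≤ p.comap N) (t : ℕ) (x : M) :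
    ((Submodule.mapQ p p N h) ^ t) (Submodule.Quotient.mk x)
      = Submodule.Quotient.mk ((N ^ t) x) := by
  induction t generalizing x with
  | zero => simp
  | succ t iht =>
    have h1 : ((Submodule.mapQ p p N h) ^ (t + 1)) (Submodule.Quotient.mk x)
        = ((Submodule.mapQ p p N h) ^ t) ((Submodule.mapQ p p N h) (Submodule.Quotient.mk x)) := by
      rw [powAdd, pow_one]
    have h2 : (Submodule.mapQ p p N h) (Submodule.Quotient.mk x)
        = Submodule.Quotient.mk (N x) := rfl
    rw [h1, h2, iht, powAdd, pow_one]

end Final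

/-- If `φ : (M,N) → (M',N')` intertwines the nilpotent operators and is strict with respect
to the monodromy filtrations, then `N` restricts to a nilpotent endomorphism of `ker φ`
whose monodromy filtration is the subspace filtration induced by `fil^M N`, and `N'`
descends to a nilpotent endomorphism of `M'/range φ` whose monodromy filtration is the
quotient filtration induced by `fil^M N'`. -/
theorem statement8 {R M M' : Type*} [CommRing R] [AddCommGroup M] [Module R M]
    [AddCommGroup M'] [Module R M']
    (N : M →ₗ[R] M) (N' : M' →ₗ[R] M') (hN : IsNilpotent N) (hN' : IsNilpotent N')
    (φ : M →ₗ[R] M') (hcomm : ∀ x : M, φ (N x) = N' (φ x))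
    (hstrict : ∀ a : ℤ,
      Submodule.map φ (filMonodromy N a) = filMonodromy N' a ⊓ LinearMap.range φ) :
    (∃ hker : ∀ x ∈ LinearMap.ker φ, N x ∈ LinearMap.ker φ,
      IsNilpotent (N.restrict hker) ∧
      ∀ a : ℤ, filMonodromy (N.restrict hker) a
        = (filMonodromy N a).comap (LinearMap.ker φ).subtype) ∧
    (∃ hcoker : LinearMap.range φ ≤ (LinearMap.range φ).comap N',
      IsNilpotent (Submodule.mapQ (LinearMap.range φ) (LinearMap.range φ) N' hcoker) ∧
      ∀ a : ℤ, filMonodromy (Submodule.mapQ (LinearMap.range φ) (LinearMap.range φ) N' hcoker) a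
        = (filMonodromy N' a).map (LinearMap.range φ).mkQ) := by
  obtain ⟨e, he⟩ := hN
  obtain ⟨e', he'⟩ := hN'
  have hnilM : N ^ (e + 1) = 0 := by rw [pow_succ, he, zero_mul]
  have hnilM' : N' ^ (e' + 1) = 0 := by rw [pow_succ, he', zero_mul]
  have φpow : ∀ (t : ℕ) (x : M), φ ((N ^ t) x) = (N' ^ t) (φ x) := by
    intro t
    induction t with
    | zero => simp
    | succ t iht =>
      intro x
      rw [powAdd, pow_one, powAdd N' t 1, pow_one, iht, hcomm]
  constructor
  · -- kernel part
    have hker : ∀ x ∈ LinearMap.ker φ, N x ∈ LinearMap.ker φ := by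
      intro x hx
      rw [LinearMap.mem_ker] at hx ⊢
      rw [hcomm, hx, map_zero]
    refine ⟨hker, ?_, ?_⟩
    · refine ⟨e + 1, ?_⟩
      apply LinearMap.ext
      intro x
      apply Subtype.ext
      rw [LinearMap.zero_apply, restrict_pow_coe, hnilM]
      rfl
    · intro a
      set K := LinearMap.ker φ
      set Nr := N.restrict hker with hNr
      have hnilr : Nr ^ (e + 1) = 0 := by
        apply LinearMap.ext
        intro x
        apply Subtype.ext
        rw [LinearMap.zero_apply, hNr, restrict_pow_coe, hnilM]
        rfl
      set G : ℤ → Submodule R K := fun b => (filMonodromy N b).comap K.subtype with hG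
      have Gmono : Monotone G := fun b b' hbb =>
        Submodule.comap_mono (filMonodromy_mono N hbb)
      have Gmap : ∀ b, Submodule.map Nr (G b) ≤ G (b - 2) := by
        rintro b _ ⟨z, hz, rfl⟩
        replace hz : (z : M) ∈ filMonodromy N b := hz
        exact map_filMonodromy N b ⟨(z : M), hz, rfl⟩
      have Gtop : ∃ t, G t = ⊤ := by
        refine ⟨(e : ℤ), ?_⟩
        rw [hG]
        simp only
        rw [filMonodromy_top N hnilM le_rfl, Submodule.comap_top]
      have Gbot : ∃ s, G s = ⊥ := by
        refine ⟨-(e : ℤ) - 1, ?_⟩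
        rw [hG]
        simp only
        rw [filMonodromy_bot N hnilM le_rfl, Submodule.comap_bot, Submodule.ker_subtype]
      have Ginj : ∀ (b : ℕ) (x : K), x ∈ G (b : ℤ) → (Nr ^ b) x ∈ G (-(b : ℤ) - 1) →
          x ∈ G ((b : ℤ) - 1) := by
        intro b x hx hNx
        replace hx : (x : M) ∈ filMonodromy N (b : ℤ) := hx
        replace hNx : (N ^ b) (x : M) ∈ filMonodromy N (-(b : ℤ) - 1) := by
          have h1 : (((Nr ^ b) x : K) : M) ∈ filMonodromy N (-(b : ℤ) - 1) := hNx
          rwa [hNr, restrict_pow_coe] at h1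
        exact fil_inj N hnilM b (x : M) hx hNx
      have Gsurj : ∀ (b : ℕ), G (-(b : ℤ)) ≤
          Submodule.map (Nr ^ b) (G (b : ℤ)) ⊔ G (-(b : ℤ) - 1) := by
        intro b x hx
        replace hx : (x : M) ∈ filMonodromy N (-(b : ℤ)) := hx
        obtain ⟨y, hy, hyx⟩ := filMonodromy_surj N hnilM b hx
        have hφy : φ y ∈ filMonodromy N' (b : ℤ) := by
          have h1 : φ y ∈ Submodule.map φ (filMonodromy N (b : ℤ)) := ⟨y, hy, rfl⟩
          rw [hstrict (b : ℤ)] at h1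
          exact h1.1
        have hφy0 : (N' ^ b) (φ y) = 0 := by
          rw [← φpow, hyx]
          exact x.2
        have h2 : φ y ∈ filMonodromy N' ((b : ℤ) - 1) :=
          fil_inj N' hnilM' b (φ y) hφy (by rw [hφy0]; exact Submodule.zero_mem _)
        have h3 : φ y ∈ filMonodromy N' ((b : ℤ) - 1) ⊓ LinearMap.range φ :=
          ⟨h2, ⟨y, rfl⟩⟩
        rw [← hstrict ((b : ℤ) - 1)] at h3
        obtain ⟨w, hw, hwφ⟩ := h3
        have hyw : y - w ∈ K := by
          rw [LinearMap.mem_ker, map_sub, hwφ, sub_self]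
        set z : K := ⟨y - w, hyw⟩ with hz
        have hzG : z ∈ G (b : ℤ) := by
          show (z : K) ∈ (filMonodromy N (b : ℤ)).comap K.subtype
          have : (z : M) ∈ filMonodromy N (b : ℤ) :=
            Submodule.sub_mem _ hy (filMonodromy_mono N (by omega) hw)
          exact this
        have hNaw : (N ^ b) w ∈ filMonodromy N (-(b : ℤ) - 1) := by
          have h4 : (N ^ b) w ∈ filMonodromy N (((b : ℤ) - 1) - 2 * b) :=
            map_pow_filMonodromy N b ((b : ℤ) - 1) ⟨w, hw, rfl⟩
          exact filMonodromy_mono N (by omega) h4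
        have hrest : x - (Nr ^ b) z ∈ G (-(b : ℤ) - 1) := by
          show ((x - (Nr ^ b) z : K) : M) ∈ filMonodromy N (-(b : ℤ) - 1)
          have h5 : ((x - (Nr ^ b) z : K) : M) = (N ^ b) w := by
            rw [Submodule.coe_sub, hNr, restrict_pow_coe]
            rw [hz]
            show (x : M) - (N ^ b) (y - w) = (N ^ b) w
            rw [map_sub, ← hyx]
            abel
          rw [h5]
          exact hNaw
        have hxeq : x = (Nr ^ b) z + (x - (Nr ^ b) z) := by abel
        rw [hxeq]
        exact Submodule.add_mem_sup ⟨z, hzG, rfl⟩ hrest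
      exact (fil_unique e Nr hnilr G Gmono Gmap Gtop Gbot Ginj Gsurj a).symm
  · -- cokernel part
    have hcoker : LinearMap.range φ ≤ (LinearMap.range φ).comap N' := by
      rintro _ ⟨m, rfl⟩
      exact ⟨N m, hcomm m⟩
    refine ⟨hcoker, ?_, ?_⟩
    · refine ⟨e' + 1, ?_⟩
      apply LinearMap.ext
      intro ξ
      obtain ⟨x, rfl⟩ := Submodule.Quotient.mk_surjective _ ξ
      rw [mapQ_pow_mk, LinearMap.zero_apply, hnilM', LinearMap.zero_apply,
        Submodule.Quotient.mk_zero]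
    · intro a
      set p := LinearMap.range φ
      set Nq := Submodule.mapQ p p N' hcoker with hNq
      have hnilq : Nq ^ (e' + 1) = 0 := by
        apply LinearMap.ext
        intro ξ
        obtain ⟨x, rfl⟩ := Submodule.Quotient.mk_surjective _ ξ
        rw [hNq, mapQ_pow_mk, LinearMap.zero_apply, hnilM', LinearMap.zero_apply,
          Submodule.Quotient.mk_zero]
      set G : ℤ → Submodule R (M' ⧸ p) := fun b => (filMonodromy N' b).map p.mkQ with hG
      have Gmono : Monotone G := fun b b' hbb =>
        Submodule.map_mono (filMonodromy_mono N' hbb)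
      have Gmap : ∀ b, Submodule.map Nq (G b) ≤ G (b - 2) := by
        rintro b _ ⟨_, ⟨x, hx, rfl⟩, rfl⟩
        rw [Submodule.mkQ_apply]
        have h1 : Nq (Submodule.Quotient.mk x) = Submodule.Quotient.mk (N' x) := rfl
        rw [h1]
        exact ⟨N' x, map_filMonodromy N' b ⟨x, hx, rfl⟩, Submodule.mkQ_apply _ _⟩
      have Gtop : ∃ t, G t = ⊤ := by
        refine ⟨(e' : ℤ), ?_⟩
        rw [hG]
        simp only
        rw [filMonodromy_top N' hnilM' le_rfl, Submodule.map_top, Submodule.range_mkQ]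
      have Gbot : ∃ s, G s = ⊥ := by
        refine ⟨-(e' : ℤ) - 1, ?_⟩
        rw [hG]
        simp only
        rw [filMonodromy_bot N' hnilM' le_rfl, Submodule.map_bot]
      have Gsurj : ∀ (b : ℕ), G (-(b : ℤ)) ≤
          Submodule.map (Nq ^ b) (G (b : ℤ)) ⊔ G (-(b : ℤ) - 1) := by
        rintro b _ ⟨x, hx, rfl⟩
        obtain ⟨y, hy, hyx⟩ := filMonodromy_surj N' hnilM' b hx
        refine Submodule.mem_sup_left ?_
        refine ⟨Submodule.Quotient.mk y, ⟨y, hy, Submodule.mkQ_apply _ _⟩, ?_⟩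
        rw [hNq, mapQ_pow_mk, hyx, Submodule.mkQ_apply]
      have Ginj : ∀ (b : ℕ) (ξ : M' ⧸ p), ξ ∈ G (b : ℤ) → (Nq ^ b) ξ ∈ G (-(b : ℤ) - 1) →
          ξ ∈ G ((b : ℤ) - 1) := by
        intro b ξ hξ hNξ
        obtain ⟨x, hx, rfl⟩ := hξ
        rw [Submodule.mkQ_apply, hNq, mapQ_pow_mk] at hNξ
        obtain ⟨u, hu, hmk⟩ := hNξ
        rw [Submodule.mkQ_apply] at hmk
        have hdiff : (N' ^ b) x - u ∈ p := (Submodule.Quotient.eq _).mp hmk.symm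
        obtain ⟨m, hm⟩ := hdiff
        have hφm : φ m ∈ filMonodromy N' (-(b : ℤ)) := by
          rw [hm]
          have h4 : (N' ^ b) x ∈ filMonodromy N' ((b : ℤ) - 2 * b) :=
            map_pow_filMonodromy N' b (b : ℤ) ⟨x, hx, rfl⟩
          exact Submodule.sub_mem _ (filMonodromy_mono N' (by omega) h4)
            (filMonodromy_mono N' (by omega) hu)
        have h5 : φ m ∈ Submodule.map φ (filMonodromy N (-(b : ℤ))) := by
          rw [hstrict (-(b : ℤ))]
          exact ⟨hφm, ⟨m, rfl⟩⟩
        obtain ⟨m', hm', hφm'⟩ := h5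
        obtain ⟨n, hn, hNn⟩ := filMonodromy_surj N hnilM b hm'
        have hφn : φ n ∈ filMonodromy N' (b : ℤ) := by
          have h6 : φ n ∈ Submodule.map φ (filMonodromy N (b : ℤ)) := ⟨n, hn, rfl⟩
          rw [hstrict (b : ℤ)] at h6
          exact h6.1
        have hx₂ : x - φ n ∈ filMonodromy N' (b : ℤ) := Submodule.sub_mem _ hx hφn
        have hN'x₂ : (N' ^ b) (x - φ n) ∈ filMonodromy N' (-(b : ℤ) - 1) := by
          have h7 : (N' ^ b) (x - φ n) = u := by
            rw [map_sub, ← φpow, hNn, hφm', hm]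
            abel
          rw [h7]
          exact hu
        have h8 : x - φ n ∈ filMonodromy N' ((b : ℤ) - 1) :=
          fil_inj N' hnilM' b (x - φ n) hx₂ hN'x₂
        refine ⟨x - φ n, h8, ?_⟩
        rw [Submodule.mkQ_apply, Submodule.mkQ_apply]
        rw [Submodule.Quotient.eq]
        have h9 : (x - φ n) - x = φ (-n) := by rw [map_neg]; abel
        rw [h9]
        exact ⟨-n, rfl⟩
      exact (fil_unique e' Nq hnilq G Gmono Gmap Gtop Gbot Ginj Gsurj a).symm
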